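/- Assume the numerical hypotheses of a smooth Fano weighted hypersurface stated in the context, and set γ := (n+1)·a_{n+1}/(ι·d). Then γ ≥ a_{n+1}/(2ι). Moreover, if equality γ = a_{n+1}/(2ι) holds, then ι = 1, n is even, a_0 = a_1 = … = a_{n−1} = 1, a_n = 2, a_{n+1} = n+1 and d = 2(n+1) (the case X_{2(n+1)} ⊂ P(1^{(n)}, 2, n+1)). -/

import Mathlib

lemma myProdDvd {α : Type*} (s : Finset α) (f : α → ℕ) (d : ℕ)
    (hc : ∀ i ∈ s, ∀ j ∈ s, i ≠ j → Nat.Coprime (f i) (f j))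
    (h : ∀ i ∈ s, f i ∣ d) : (∏ i ∈ s, f i) ∣ d := by
  classical
  induction s using Finset.induction with
  | empty => simp
  | @insert x t hx ih =>
    rw [Finset.prod_insert hx]
    refine Nat.Coprime.mul_dvd_of_dvd_of_dvd ?_ (h x (by simp)) ?_
    · exact Nat.Coprime.prod_right fun j hj =>
        hc x (by simp) j (by simp [hj]) (by rintro rfl; exact hx hj)
    · exact ih (fun i hi j hj hij => hc i (by simp [hi]) j (by simp [hj]) hij)
        (fun i hi => h i (by simp [hi]))

lemma mySumProd (m : ℕ) (f : Fin m → ℕ) (h : ∀ i, 1 ≤ f i) :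
    ∑ i, f i + 1 ≤ ∏ i, f i + m := by
  induction m with
  | zero => simp
  | succ m ih =>
    rw [Fin.sum_univ_castSucc, Fin.prod_univ_castSucc]
    have h1 := ih (fun i => f i.castSucc) (fun i => h _)
    have hl := h (Fin.last m)
    have hp : 1 ≤ ∏ i : Fin m, f i.castSucc :=
      Finset.one_le_prod' fun i _ => h _
    nlinarith [h1, hl, hp]

set_option maxHeartbeats 1000000 in
lemma keyNat (n : ℕ) (hn : 1 ≤ n) (a : Fin (n + 2) → ℕ) (d ι : ℕ)
    (ha_pos : ∀ i, 0 < a i) (ha_mono : Monotone a)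
    (ha_top : 1 < a (Fin.last (n + 1)))
    (hd : 0 < d) (hι : 0 < ι)
    (hdvd : ∀ i, a i ∣ d)
    (hcop : ∀ i j : Fin (n + 2), i ≠ j → Nat.Coprime (a i) (a j))
    (hadj : ∑ i, a i = d + ι)
    (hlc : ∀ i, d ≠ a i) :
    d ≤ 2 * (n + 1) ∧ (d = 2 * (n + 1) →
      ι = 1 ∧ Even n ∧ (∀ i : Fin (n + 2), (i : ℕ) < n → a i = 1) ∧
        a ⟨n, Nat.lt_succ_of_lt (Nat.lt_succ_self n)⟩ = 2 ∧ a (Fin.last (n + 1)) = n + 1) := by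
  set A := a (Fin.last (n + 1)) with hAdef
  set B := a ((Fin.last n).castSucc) with hBdef
  have hs : ∑ i, a i = (∑ i : Fin n, a i.castSucc.castSucc) + B + A := by
    rw [Fin.sum_univ_castSucc, Fin.sum_univ_castSucc]
  have hpr : ∏ i, a i = (∏ i : Fin n, a i.castSucc.castSucc) * B * A := by
    rw [Fin.prod_univ_castSucc, Fin.prod_univ_castSucc]
  set s := ∑ i : Fin n, a i.castSucc.castSucc with hsdef
  set p := ∏ i : Fin n, a i.castSucc.castSucc with hpdef
  have hsn : n ≤ s := by
    calc (n : ℕ) = ∑ _i : Fin n, 1 := by simp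
    _ ≤ s := Finset.sum_le_sum fun i _ => ha_pos _
  have hps : s + 1 ≤ p + n := mySumProd n _ fun i => ha_pos _
  have hPdvd : p * B * A ∣ d := by
    rw [← hpr]
    exact myProdDvd Finset.univ a d (fun i _ j _ hij => hcop i j hij)
      (fun i _ => hdvd i)
  have hPle : p * B * A ≤ d := Nat.le_of_dvd hd hPdvd
  have hadj' : s + B + A = d + ι := by rw [← hs]; exact hadj
  rcases Nat.lt_or_ge B 2 with hB1 | hB2
  · -- B = 1 : all first n+1 weights are 1
    have hB1' : B = 1 := by have := ha_pos ((Fin.last n).castSucc); omega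
    have hall : ∀ i : Fin n, a i.castSucc.castSucc = 1 := by
      intro i
      have hle : a i.castSucc.castSucc ≤ B :=
        ha_mono (by simp [Fin.le_def])
      have := ha_pos i.castSucc.castSucc
      omega
    have hs_eq : s = n := by
      rw [hsdef, Finset.sum_congr rfl fun i _ => hall i]; simp
    obtain ⟨q, hq⟩ := hdvd (Fin.last (n + 1))
    have hq2 : 2 ≤ q := by
      rcases Nat.lt_or_ge q 2 with h | h
      · interval_cases q
        · omega
        · exact absurd (by omega : d = a (Fin.last (n + 1))) (hlc (Fin.last (n + 1)))
      · exact h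
    have h2A : 2 * A ≤ d := by
      calc 2 * A = A * 2 := by ring
      _ ≤ A * q := Nat.mul_le_mul_left A hq2
      _ = d := hq.symm
    constructor
    · omega
    · intro hdeq; omega
  · -- B ≥ 2
    have hmidne : ((Fin.last n).castSucc : Fin (n + 2)) ≠ Fin.last (n + 1) := by
      apply Fin.ne_of_val_ne; simp
    have hBAcop : Nat.Coprime B A := hcop _ _ hmidne
    have hBleA : B ≤ A := ha_mono (by simp [Fin.le_def])
    have hBneA : B ≠ A := by
      intro h
      have hc := hBAcop
      rw [← h, Nat.Coprime, Nat.gcd_self] at hc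
      omega
    have hA3 : B + 1 ≤ A := by omega
    obtain ⟨R, hR⟩ := Nat.le.dest hsn
    have hp1 : R + 1 ≤ p := by omega
    have hprod : (R + 1) * (B * A) ≤ d := by
      calc (R + 1) * (B * A) ≤ p * (B * A) := Nat.mul_le_mul_right _ hp1
      _ = p * B * A := by ring
      _ ≤ d := hPle
    have h6 : 6 ≤ B * A := by
      have := Nat.mul_le_mul hB2 (show 3 ≤ A by omega)
      omega
    have hBA4 : 2 * B + 2 * A ≤ B * A + 4 := by nlinarith
    have hRBA : R * 6 ≤ R * (B * A) := Nat.mul_le_mul_left R h6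
    have hkey : 6 * R + 2 * B + 2 * A ≤ d + 4 := by nlinarith [hprod, hBA4, hRBA]
    have hadj'' : n + R + B + A = d + ι := by omega
    constructor
    · omega
    · intro hdeq
      have hι1 : ι = 1 := by omega
      have hR0 : R = 0 := by omega
      have hBA : B + A = n + 3 := by omega
      have hBAle : B * A ≤ d := by
        have := hprod; rw [hR0] at this; simpa using this
      have hB2eq : B = 2 := by
        by_contra hc
        obtain ⟨u, hu⟩ : ∃ u, B = u + 3 := ⟨B - 3, by omega⟩
        obtain ⟨v, hv⟩ : ∃ v, A = v + 4 := ⟨A - 4, by omega⟩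
        have hexp : B * A = u * v + 4 * u + 3 * v + 12 := by rw [hu, hv]; ring
        have h0 : 0 ≤ u * v := Nat.zero_le _
        have hF : False := by linarith [hexp, h0, hBAle, hBA, hdeq]
        exact hF.elim
      have hAeq : A = n + 1 := by omega
      have heven : Even n := by
        rcases Nat.even_or_odd n with h | h
        · exact h
        · exfalso
          have h2 : (2 : ℕ) ∣ n + 1 := by
            obtain ⟨k, hk⟩ := h; omega
          rw [hB2eq, hAeq] at hBAcop
          have := Nat.Coprime.eq_one_of_dvd hBAcop h2
          omega
      have hseq : s = n := by omega
      have hall : ∀ i : Fin n, a i.castSucc.castSucc = 1 := by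
        intro i
        by_contra hne
        have h2 : 2 ≤ a i.castSucc.castSucc := by
          have := ha_pos i.castSucc.castSucc; omega
        have hlt : (∑ _j : Fin n, 1) < s :=
          Finset.sum_lt_sum (fun j _ => ha_pos _) ⟨i, Finset.mem_univ i, by omega⟩
        simp at hlt
        omega
      refine ⟨hι1, heven, ?_, ?_, hAeq⟩
      · intro i hi
        have hieq : i = (⟨(i : ℕ), hi⟩ : Fin n).castSucc.castSucc := by
          apply Fin.ext; simp
        rw [hieq]; exact hall _
      · have : (⟨n, by omega⟩ : Fin (n + 2)) = (Fin.last n).castSucc := by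
          apply Fin.ext; simp
        rw [this, ← hBdef]; exact hB2eq

/-- For the weights and degree of a smooth Fano weighted
hypersurface of index `ι`, setting `γ = (n+1)·a_{n+1}/(ι·d)`, one has
`γ ≥ a_{n+1}/(2ι)`, and in case of equality: `ι = 1`, `n` is even,
`a_0 = … = a_{n-1} = 1`, `a_n = 2`, `a_{n+1} = n+1` and `d = 2(n+1)`. -/
theorem gamma_lower_bound (n : ℕ) (hn : 1 ≤ n) (a : Fin (n + 2) → ℕ) (d ι : ℕ)
    (ha_pos : ∀ i, 0 < a i) (ha_mono : Monotone a)
    (ha_top : 1 < a (Fin.last (n + 1)))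
    (hd : 0 < d) (hι : 0 < ι)
    (hdvd : ∀ i, a i ∣ d)
    (hcop : ∀ i j : Fin (n + 2), i ≠ j → Nat.Coprime (a i) (a j))
    (hadj : ∑ i, a i = d + ι)
    (hlc : ∀ i, d ≠ a i) :
    ((n + 1 : ℚ) * (a (Fin.last (n + 1)) : ℚ)) / ((ι : ℚ) * (d : ℚ)) ≥
      (a (Fin.last (n + 1)) : ℚ) / (2 * (ι : ℚ)) ∧
    (((n + 1 : ℚ) * (a (Fin.last (n + 1)) : ℚ)) / ((ι : ℚ) * (d : ℚ)) =
        (a (Fin.last (n + 1)) : ℚ) / (2 * (ι : ℚ)) →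
      ι = 1 ∧ Even n ∧ (∀ i : Fin (n + 2), (i : ℕ) < n → a i = 1) ∧
        a ⟨n, by omega⟩ = 2 ∧ a (Fin.last (n + 1)) = n + 1 ∧ d = 2 * (n + 1)) := by
  obtain ⟨hle, heq⟩ := keyNat n hn a d ι ha_pos ha_mono ha_top hd hι hdvd hcop hadj hlc
  have hA0 : (0 : ℚ) < (a (Fin.last (n + 1)) : ℚ) := by exact_mod_cast ha_pos _
  have hι0 : (0 : ℚ) < (ι : ℚ) := by exact_mod_cast hι
  have hd0 : (0 : ℚ) < (d : ℚ) := by exact_mod_cast hd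
  constructor
  · rw [ge_iff_le, div_le_div_iff₀ (by positivity) (by positivity)]
    have hdle : (d : ℚ) ≤ 2 * (n + 1) := by exact_mod_cast hle
    nlinarith [mul_nonneg (mul_nonneg hA0.le hι0.le) (sub_nonneg.mpr hdle)]
  · intro h
    rw [div_eq_div_iff (by positivity) (by positivity)] at h
    have hAne : (a (Fin.last (n + 1)) : ℚ) ≠ 0 := ne_of_gt hA0
    have hιne : (ι : ℚ) ≠ 0 := ne_of_gt hι0
    have h2 : ((a (Fin.last (n + 1)) : ℚ) * ι) * (2 * (n + 1)) =
        ((a (Fin.last (n + 1)) : ℚ) * ι) * d := by linear_combination h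
    have h3 := mul_left_cancel₀ (mul_ne_zero hAne hιne) h2
    have hdnat : d = 2 * (n + 1) := by exact_mod_cast h3.symm
    obtain ⟨hι1, hev, hones, hB, hA⟩ := heq hdnat
    exact ⟨hι1, hev, hones, hB, hA, hdnat⟩
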